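/- arXiv:1709.03633 — 4 statements merged into one kernel-verified Lean document; each statement's English description precedes it below -/
import Mathlib

section
/- For all real t with 0 < t ≤ 1/2, M(t) < R(t), where M(t) = log t - log(|log(1-t)|) - (log(1-t)+t)/t and R(t) = t - log(1+t). -/
lemma g_mono (a b : ℝ) (ha : 1 < a) (hab : a < b) :
    a - Real.log a < b - Real.log b := by
  have ha0 : 0 < a := by linarith
  have hb0 : 0 < b := by linarith
  have h := Real.log_le_sub_one_of_pos (show 0 < b / a by positivity)
  rw [Real.log_div (by linarith) (by linarith)] at h
  have h2 : b / a - 1 < b - a := by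
    rw [div_sub' (ne_of_gt ha0), div_lt_iff₀ ha0]
    nlinarith
  linarith

lemma key (t : ℝ) (ht0 : 0 < t) (ht1 : t ≤ 1/2) :
    -Real.log (1 - t) < t + t ^ 2 := by
  have h1 : (0:ℝ) < 1 - t := by linarith
  have hq := Real.quadratic_le_exp_of_nonneg (show (0:ℝ) ≤ t + t ^ 2 by positivity)
  have h : Real.exp (-(t + t ^ 2)) < 1 - t := by
    rw [Real.exp_neg, inv_lt_comm₀ (Real.exp_pos _) h1, inv_eq_one_div, div_lt_iff₀ h1]
    nlinarith [mul_le_mul_of_nonneg_right hq (le_of_lt h1), sq_nonneg t, sq_nonneg (t*t), mul_pos ht0 ht0]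
  have := (Real.lt_log_iff_exp_lt h1).mpr h
  linarith

theorem M_lt_R (t : ℝ) (ht0 : 0 < t) (ht1 : t ≤ 1/2) :
    Real.log t - Real.log |Real.log (1 - t)| - (Real.log (1 - t) + t) / t
      < t - Real.log (1 + t) := by
  have h1 : (0:ℝ) < 1 - t := by linarith
  have hL : Real.log (1 - t) < 0 := Real.log_neg h1 (by linarith)
  set u : ℝ := -Real.log (1 - t) with hu
  have habs : |Real.log (1 - t)| = u := abs_of_neg hL
  have hut : t < u := by
    have := Real.add_one_lt_exp (show -t ≠ 0 by intro h; simp at h; linarith)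
    have h2 : Real.log (1 - t) < -t := by
      have := Real.log_lt_log h1 (show (1 - t) < Real.exp (-t) by linarith)
      rwa [Real.log_exp] at this
    simp only [hu]; linarith
  have hkey : u < t + t ^ 2 := key t ht0 ht1
  have ha : 1 < u / t := (one_lt_div ht0).mpr hut
  have hab : u / t < 1 + t := by
    rw [div_lt_iff₀ ht0]; nlinarith
  have := g_mono (u / t) (1 + t) ha hab
  rw [Real.log_div (by linarith) (by linarith)] at this
  have hsplit : (Real.log (1 - t) + t) / t = 1 - u / t := by
    field_simp [hu]; ring
  rw [habs, hsplit]
  linarith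
end

section
/- Any two distinct points z, z' in the region { x + iy : -1/2 < x ≤ 1/2, y > 1/N } of the upper half-plane are Γ₀(N)-inequivalent: if γ ∈ Γ₀(N) with γ·z = z' and both z, z' are in the region, then z = z'. -/
open UpperHalfPlane

theorem region_inequivalent (N : ℕ) (hN : 0 < N)
    (z z' : UpperHalfPlane)
    (hz : -1/2 < z.re ∧ z.re ≤ 1/2 ∧ 1 / (N : ℝ) < z.im)
    (hz' : -1/2 < z'.re ∧ z'.re ≤ 1/2 ∧ 1 / (N : ℝ) < z'.im)
    (γ : Matrix.SpecialLinearGroup (Fin 2) ℤ) (hγ : γ ∈ CongruenceSubgroup.Gamma0 N)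
    (h : γ • z = z') : z = z' := by
  obtain ⟨hz1, hz2, hz3⟩ := hz
  obtain ⟨hz'1, hz'2, hz'3⟩ := hz'
  have hN' : (0:ℝ) < N := by exact_mod_cast hN
  have hzim : 0 < z.im := z.im_pos
  have hc : (N:ℤ) ∣ γ 1 0 := by
    rw [CongruenceSubgroup.Gamma0_mem] at hγ
    exact (ZMod.intCast_zmod_eq_zero_iff_dvd _ _).mp hγ
  have hco : (z' : ℂ) =
      ((γ 0 0 : ℂ) * z + (γ 0 1 : ℂ)) / ((γ 1 0 : ℂ) * z + (γ 1 1 : ℂ)) := by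
    rw [← h, specialLinearGroup_apply]
    simp
  by_cases hc0 : γ 1 0 = 0
  · -- c = 0 : γ is ± an integer translation
    have hdet : γ 0 0 * γ 1 1 = 1 := by
      have hd := γ.2
      rw [Matrix.det_fin_two] at hd
      have h2 : (γ 0 0 : ℤ) * γ 1 1 - γ 0 1 * γ 1 0 = 1 := hd
      rw [hc0] at h2
      simpa using h2
    have key : ∃ m : ℤ, (z' : ℂ) = (z : ℂ) + m := by
      rcases Int.mul_eq_one_iff_eq_one_or_neg_one.mp hdet with ⟨ha, hd⟩ | ⟨ha, hd⟩
      · refine ⟨γ 0 1, ?_⟩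
        rw [hco, hc0, ha, hd]
        push_cast
        ring
      · refine ⟨-γ 0 1, ?_⟩
        rw [hco, hc0, ha, hd]
        push_cast
        field_simp
        ring
    obtain ⟨m, hm⟩ := key
    have hre : z'.re = z.re + (m : ℝ) := by
      have := congrArg Complex.re hm
      simpa [UpperHalfPlane.coe_re] using this
    have hm0 : m = 0 := by
      have h1 : (-1 : ℝ) < (m : ℝ) := by rw [hre] at hz'1; linarith
      have h2 : (m : ℝ) < 1 := by rw [hre] at hz'2; linarith
      have h1' : (-1 : ℤ) < m := by exact_mod_cast h1
      have h2' : m < 1 := by exact_mod_cast h2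
      omega
    apply UpperHalfPlane.ext
    rw [hm, hm0]
    simp
  · -- c ≠ 0 : the imaginary part drops below 1/N, contradiction
    exfalso
    have him : z'.im = z.im / Complex.normSq (denom γ z) := by
      rw [← h]; exact ModularGroup.im_smul_eq_div_normSq γ z
    have hs : 0 < Complex.normSq (denom γ z) := normSq_denom_pos γ z.im_pos.ne'
    have hmul : z'.im * Complex.normSq (denom γ z) = z.im := by
      rw [him]; field_simp
    have hb : ((γ 1 0 : ℝ) * z.im) ^ 2 ≤ Complex.normSq (denom γ z) := by
      rw [ModularGroup.denom_apply, Complex.normSq_apply]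
      simp only [Complex.add_re, Complex.add_im, Complex.mul_re, Complex.mul_im,
        Complex.intCast_re, Complex.intCast_im, UpperHalfPlane.coe_re, UpperHalfPlane.coe_im]
      nlinarith [sq_nonneg ((γ 1 0 : ℝ) * z.re + (γ 1 1 : ℝ))]
    have hcN : (N : ℝ) ≤ |(γ 1 0 : ℝ)| := by
      have h1 : (N : ℤ) ≤ |γ 1 0| := Int.le_of_dvd (abs_pos.mpr hc0) ((dvd_abs _ _).mpr hc)
      calc (N : ℝ) ≤ ((|γ 1 0| : ℤ) : ℝ) := by exact_mod_cast h1
        _ = |(γ 1 0 : ℝ)| := by push_cast; rfl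
    have hcsq : (N : ℝ) ^ 2 ≤ (γ 1 0 : ℝ) ^ 2 := by
      nlinarith [sq_abs ((γ 1 0 : ℝ)), abs_nonneg ((γ 1 0 : ℝ))]
    have h1 : (N : ℝ) ^ 2 * z.im ^ 2 ≤ Complex.normSq (denom γ z) := by
      nlinarith [sq_nonneg z.im]
    have h2 : 1 < z.im * (N : ℝ) := (div_lt_iff₀ hN').mp hz3
    have h3 : 1 < z'.im * (N : ℝ) := (div_lt_iff₀ hN').mp hz'3
    nlinarith [mul_le_mul_of_nonneg_left h1 z'.im_pos.le, mul_pos hN' hzim,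
      z'.im_pos, mul_pos hzim hzim]
end

section
/- Let k, ℓ be positive integers and χ a function ℤ → ℂ with |χ(ℓ)| = |χ(ℓ+1)| = 1. Define f_n(z) = conj(χ(n))·n^{k-1}·exp(2πinz) and h(z) = f_ℓ(z) + f_{ℓ+1}(z). Then h(x + iy) = 0 with x ∈ (-1/2, 1/2] if and only if exp(2πix) = -conj(χ(ℓ))·χ(ℓ+1) and y = -((k-1)/(2π))·log(1 - 1/(ℓ+1)); in particular h has exactly one zero in the strip { x + iy : -1/2 < x ≤ 1/2, y ∈ ℝ }. -/
open Complex

theorem h_unique_zero (k ℓ : ℕ) (hk : 1 ≤ k) (hℓ : 1 ≤ ℓ)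
    (χ : ℤ → ℂ) (hχℓ : ‖χ ℓ‖ = 1) (hχℓ1 : ‖χ (ℓ + 1)‖ = 1)
    (f : ℕ → ℂ → ℂ)
    (hf : ∀ (n : ℕ) (z : ℂ), f n z =
      (starRingEnd ℂ) (χ n) * (n : ℂ) ^ (k - 1) * Complex.exp (2 * Real.pi * Complex.I * n * z))
    (h : ℂ → ℂ) (hh : ∀ z : ℂ, h z = f ℓ z + f (ℓ + 1) z) :
    (∀ x y : ℝ, -1/2 < x → x ≤ 1/2 →
      (h (x + Complex.I * y) = 0 ↔
        (Complex.exp (2 * Real.pi * Complex.I * x) = -(starRingEnd ℂ) (χ ℓ) * χ (ℓ + 1) ∧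
         y = -(((k : ℝ) - 1) / (2 * Real.pi)) * Real.log (1 - 1 / ((ℓ : ℝ) + 1))))) ∧
    (∃! z : ℂ, (-1/2 < z.re ∧ z.re ≤ 1/2) ∧ h z = 0) := by
  have hπ := Real.pi_pos
  set K := k - 1 with hKdef
  have hKr : ((k : ℝ) - 1) = (K : ℝ) := by
    have hkK : k = K + 1 := (Nat.succ_pred_eq_of_pos hk).symm
    rw [hkK]; push_cast; ring
  have hℓR : (0:ℝ) < (ℓ:ℝ) := by exact_mod_cast hℓ
  have hℓ1R : (0:ℝ) < (ℓ:ℝ) + 1 := by linarith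
  set u : ℂ := -(starRingEnd ℂ) (χ ℓ) * χ (ℓ + 1) with hu
  set r : ℝ := ((ℓ:ℝ) / ((ℓ:ℝ) + 1)) ^ K with hr
  have hrpos : 0 < r := by positivity
  set y₀ : ℝ := -(((k : ℝ) - 1) / (2 * Real.pi)) * Real.log (1 - 1 / ((ℓ : ℝ) + 1)) with hy₀
  have hrat : 1 - 1 / ((ℓ:ℝ) + 1) = (ℓ:ℝ) / ((ℓ:ℝ) + 1) := by
    field_simp
    ring
  have hlogr : Real.log r = (K:ℝ) * Real.log ((ℓ:ℝ) / ((ℓ:ℝ) + 1)) := by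
    rw [hr, Real.log_pow]
  have hy₀exp : Real.exp (-(2 * Real.pi * y₀)) = r := by
    have : -(2 * Real.pi * y₀) = Real.log r := by
      rw [hy₀, hKr, hrat, hlogr]
      field_simp
    rw [this, Real.exp_log hrpos]
  have hexp_iff : ∀ y : ℝ, Real.exp (-(2 * Real.pi * y)) = r ↔ y = y₀ := by
    intro y
    rw [← hy₀exp, Real.exp_eq_exp]
    constructor
    · intro hyy; nlinarith
    · intro hyy; rw [hyy]
  -- basic facts about u
  have habsu : ‖u‖ = 1 := by
    rw [hu]
    simp only [norm_mul, norm_neg, Complex.norm_conj]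
    rw [hχℓ, hχℓ1, one_mul]
  have hune : u ≠ 0 := by
    intro h0; rw [h0] at habsu; simp at habsu
  have hc1 : (starRingEnd ℂ) (χ ((ℓ:ℤ) + 1)) * χ ((ℓ:ℤ) + 1) = 1 := by
    have := Complex.mul_conj (χ ((ℓ:ℤ) + 1))
    rw [mul_comm] at this
    rw [this, Complex.normSq_eq_norm_sq, hχℓ1]
    norm_num
  have hℓC : ((ℓ:ℂ) + 1) ≠ 0 := by
    have : (((ℓ:ℝ) + 1 : ℝ) : ℂ) ≠ 0 := Complex.ofReal_ne_zero.2 (ne_of_gt hℓ1R)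
    push_cast at this
    exact this
  have hχℓ1ne : χ ((ℓ:ℤ) + 1) ≠ 0 := by
    intro h0; rw [h0] at hχℓ1; simp at hχℓ1
  have hBne : (starRingEnd ℂ) (χ ((ℓ:ℤ) + 1)) * ((ℓ:ℂ) + 1) ^ K ≠ 0 := by
    apply mul_ne_zero
    · simpa using hχℓ1ne
    · exact pow_ne_zero _ hℓC
  -- the key reformulation
  have keyW : ∀ z : ℂ, h z = 0 ↔ Complex.exp (2 * Real.pi * Complex.I * z) = u * (r:ℂ) := by
    intro z
    rw [hh, hf, hf]
    have hsplit : (2 * (Real.pi:ℂ) * Complex.I * ((ℓ + 1 : ℕ):ℂ) * z)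
        = 2 * (Real.pi:ℂ) * Complex.I * (ℓ:ℂ) * z + 2 * (Real.pi:ℂ) * Complex.I * z := by
      push_cast; ring
    rw [hsplit, Complex.exp_add]
    set E := Complex.exp (2 * (Real.pi:ℂ) * Complex.I * (ℓ:ℂ) * z) with hE
    set W := Complex.exp (2 * (Real.pi:ℂ) * Complex.I * z) with hW
    set A := (starRingEnd ℂ) (χ (ℓ:ℤ)) * (ℓ:ℂ) ^ K with hA
    set B := (starRingEnd ℂ) (χ ((ℓ:ℤ) + 1)) * ((ℓ:ℂ) + 1) ^ K with hB
    have hcast : ((ℓ + 1 : ℕ) : ℤ) = (ℓ:ℤ) + 1 := by push_cast; ring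
    have hcast2 : (((ℓ + 1 : ℕ)) : ℂ) = (ℓ:ℂ) + 1 := by push_cast; ring
    have hrw : (starRingEnd ℂ) (χ ((ℓ:ℤ))) * (ℓ:ℂ) ^ K * E
        + (starRingEnd ℂ) (χ (((ℓ+1:ℕ):ℤ))) * (((ℓ+1:ℕ)):ℂ) ^ K * (E * W)
        = E * (A + B * W) := by
      rw [hcast, hcast2, hA, hB]; ring
    rw [hrw]
    have hEne : E ≠ 0 := Complex.exp_ne_zero _
    have hBur : B * (u * (r:ℂ)) = -A := by
      have hpne : ((ℓ:ℂ) + 1) ^ K ≠ 0 := pow_ne_zero _ hℓC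
      have hrC : ((r:ℝ):ℂ) = (ℓ:ℂ) ^ K / ((ℓ:ℂ) + 1) ^ K := by
        rw [hr]; push_cast; rw [div_pow]
      rw [hB, hA, hu, hrC]
      rw [show (starRingEnd ℂ) (χ ((ℓ:ℤ) + 1)) * ((ℓ:ℂ) + 1) ^ K *
            (-(starRingEnd ℂ) (χ (ℓ:ℤ)) * χ ((ℓ:ℤ) + 1) * ((ℓ:ℂ) ^ K / ((ℓ:ℂ) + 1) ^ K))
          = ((starRingEnd ℂ) (χ ((ℓ:ℤ) + 1)) * ((ℓ:ℂ) + 1) ^ K *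
            (-(starRingEnd ℂ) (χ (ℓ:ℤ)) * χ ((ℓ:ℤ) + 1)) * (ℓ:ℂ) ^ K) / ((ℓ:ℂ) + 1) ^ K
          from by ring, div_eq_iff hpne]
      linear_combination (-(starRingEnd ℂ) (χ (ℓ:ℤ)) * (ℓ:ℂ) ^ K * ((ℓ:ℂ) + 1) ^ K) * hc1
    constructor
    · intro h0
      rcases mul_eq_zero.1 h0 with hc | hc
      · exact absurd hc hEne
      · have hBW : B * W = B * (u * (r:ℂ)) := by rw [hBur]; linear_combination hc
        exact mul_left_cancel₀ hBne hBW
    · intro hWe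
      rw [hWe]
      rw [hBur]
      ring
  -- split exp(2πi(x+iy)) into phase and modulus
  have hexpz : ∀ x y : ℝ, Complex.exp (2 * (Real.pi:ℂ) * Complex.I * ((x:ℂ) + Complex.I * y))
      = Complex.exp (2 * (Real.pi:ℂ) * Complex.I * x) * ((Real.exp (-(2 * Real.pi * y)) : ℝ) : ℂ) := by
    intro x y
    rw [Complex.ofReal_exp, ← Complex.exp_add]
    congr 1
    push_cast
    linear_combination (2 * (Real.pi:ℂ) * (y:ℂ)) * Complex.I_sq
  have habsphase : ∀ x : ℝ, ‖Complex.exp (2 * (Real.pi:ℂ) * Complex.I * x)‖ = 1 := by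
    intro x
    rw [show (2 * (Real.pi:ℂ) * Complex.I * x) = ((2 * Real.pi * x : ℝ) : ℂ) * Complex.I by
      push_cast; ring]
    exact Complex.norm_exp_ofReal_mul_I _
  have key : ∀ x y : ℝ, h ((x:ℂ) + Complex.I * y) = 0 ↔
      (Complex.exp (2 * Real.pi * Complex.I * x) = u ∧ y = y₀) := by
    intro x y
    rw [keyW, hexpz]
    set s := Real.exp (-(2 * Real.pi * y)) with hs
    have hspos : 0 < s := Real.exp_pos _
    constructor
    · intro heq
      have habs := congrArg (‖·‖) heq
      rw [norm_mul, norm_mul, habsphase, habsu, one_mul, one_mul, Complex.norm_real, Real.norm_eq_abs,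
        Complex.norm_real, Real.norm_eq_abs, abs_of_pos hspos, abs_of_pos hrpos] at habs
      have hy : y = y₀ := (hexp_iff y).1 habs
      refine ⟨?_, hy⟩
      have hrne : ((r:ℝ):ℂ) ≠ 0 := Complex.ofReal_ne_zero.2 (ne_of_gt hrpos)
      have : Complex.exp (2 * Real.pi * Complex.I * x) * (r:ℂ) = u * (r:ℂ) := by
        rw [← habs] at heq ⊢; exact heq
      exact mul_right_cancel₀ hrne this
    · rintro ⟨h1, h2⟩
      have : s = r := (hexp_iff y).2 h2
      rw [h1, this]
  refine ⟨fun x y _ _ => key x y, ?_⟩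
  -- existence and uniqueness
  set x₀ : ℝ := u.arg / (2 * Real.pi) with hx₀
  have h2π : (0:ℝ) < 2 * Real.pi := by linarith
  have hx₀lt : -1/2 < x₀ := by
    rw [hx₀, lt_div_iff₀ h2π]
    have := Complex.neg_pi_lt_arg u
    nlinarith
  have hx₀le : x₀ ≤ 1/2 := by
    rw [hx₀, div_le_iff₀ h2π]
    have := Complex.arg_le_pi u
    nlinarith
  have hx₀exp : Complex.exp (2 * Real.pi * Complex.I * x₀) = u := by
    have hπC : ((Real.pi:ℝ):ℂ) ≠ 0 := Complex.ofReal_ne_zero.2 (ne_of_gt hπ)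
    have harg : (2 * (Real.pi:ℂ) * Complex.I * (x₀:ℂ)) = (u.arg : ℂ) * Complex.I := by
      rw [hx₀]
      push_cast
      field_simp
    rw [harg]
    have := Complex.norm_mul_exp_arg_mul_I u
    rw [habsu] at this
    simpa using this
  refine ⟨(x₀:ℂ) + Complex.I * (y₀:ℂ), ⟨⟨?_, ?_⟩, ?_⟩, ?_⟩
  · simpa using hx₀lt
  · simpa using hx₀le
  · exact (key x₀ y₀).2 ⟨hx₀exp, rfl⟩
  · rintro z ⟨⟨hz1, hz2⟩, hz0⟩
    have hzdec : z = (z.re : ℂ) + Complex.I * (z.im : ℂ) := by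
      rw [mul_comm]; exact (Complex.re_add_im z).symm
    rw [hzdec] at hz0
    obtain ⟨hze, hzi⟩ := (key z.re z.im).1 hz0
    -- phases equal ⇒ reals equal
    have hee : Complex.exp (2 * Real.pi * Complex.I * z.re)
        = Complex.exp (2 * Real.pi * Complex.I * x₀) := by rw [hze, hx₀exp]
    obtain ⟨n, hn⟩ := Complex.exp_eq_exp_iff_exists_int.1 hee
    have h2πI : (2 * (Real.pi:ℂ) * Complex.I) ≠ 0 := by
      apply mul_ne_zero
      · apply mul_ne_zero
        · norm_num
        · exact Complex.ofReal_ne_zero.2 (ne_of_gt hπ)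
      · exact Complex.I_ne_zero
    have hre : (z.re : ℂ) = (x₀ : ℂ) + (n : ℂ) := by
      apply mul_left_cancel₀ h2πI
      rw [mul_add]
      linear_combination hn
    have hreR : z.re = x₀ + (n : ℝ) := by exact_mod_cast hre
    have hn0 : n = 0 := by
      have h1 : ((n:ℝ)) < 1 := by linarith
      have h2 : (-1:ℝ) < (n:ℝ) := by linarith
      have h1' : n < 1 := by exact_mod_cast h1
      have h2' : -1 < n := by exact_mod_cast h2
      omega
    have hre0 : z.re = x₀ := by rw [hreR, hn0]; simp
    rw [hzdec, hre0, hzi]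
end

section
/- Let s > 0 and x > 0 with x ≥ s + 2, and let Q(s,x) = (1/Γ(s))·∫_x^∞ t^{s-1} e^{-t} dt be the normalized upper incomplete gamma function. Then Q(s,x) ≤ C·( exp(-(x-s)²/(4s)) + exp(-|x-s|/4) ) for some absolute constant C. -/
open Set Real MeasureTheory

lemma key_exp {l : ℝ} (h0 : 0 ≤ l) (h1 : l ≤ 1/2) : Real.exp (-(l + l^2)) ≤ 1 - l := by
  set u : ℝ := l + l^2 with hu
  have hu0 : 0 ≤ u := by positivity
  have hu1 : |(-u)| ≤ 1 := by rw [abs_neg, abs_of_nonneg hu0]; nlinarith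
  have hb := Real.exp_bound hu1 (n := 4) (by norm_num)
  have hsum : ∑ m ∈ Finset.range 4, (-u) ^ m / m.factorial = 1 - u + u^2/2 - u^3/6 := by
    simp [Finset.sum_range_succ, Nat.factorial]
    ring
  rw [hsum, abs_neg, abs_of_nonneg hu0] at hb
  norm_num [Nat.factorial] at hb
  have h3 : Real.exp (-u) ≤ 1 - u + u^2/2 - u^3/6 + u^4*(5/96) := by
    have := abs_le.mp hb
    linarith [this.2]
  have h4 : 1 - u + u^2/2 - u^3/6 + u^4*(5/96) ≤ 1 - l := by
    rw [hu]
    nlinarith [sq_nonneg l, sq_nonneg (l - 1/2), pow_le_pow_left₀ h0 h1 3,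
      pow_le_pow_left₀ h0 h1 4, sq_nonneg (l*(l-1/2))]
  linarith

lemma chernoff {s x l : ℝ} (hs : 0 < s) (hx : 0 < x) (hl0 : 0 ≤ l) (hl1 : l < 1) :
    ∫ t in Set.Ioi x, t ^ (s - 1) * Real.exp (-t)
      ≤ Real.exp (-(l * x)) * ((1 / (1 - l)) ^ s * Real.Gamma s) := by
  have h1l : 0 < 1 - l := by linarith
  have hig : IntegrableOn (fun t : ℝ => t ^ (s - 1) * Real.exp (-((1-l) * t))) (Ioi 0) := by
    have h := integrableOn_rpow_mul_exp_neg_mul_rpow (p := 1) (s := s - 1) (b := 1 - l)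
      (by linarith) one_pos h1l
    simp only [Real.rpow_one] at h
    exact h.congr_fun (fun t _ => by simp only [neg_mul]) measurableSet_Ioi
  have hig2 : IntegrableOn (fun t : ℝ => Real.exp (-(l*x)) * (t ^ (s - 1) * Real.exp (-((1-l) * t)))) (Ioi 0) :=
    hig.const_mul _
  have hif : IntegrableOn (fun t : ℝ => t ^ (s - 1) * Real.exp (-t)) (Ioi x) := by
    have := Real.GammaIntegral_convergent hs
    exact ((this.mono_set (Ioi_subset_Ioi hx.le)).congr_fun
      (fun t ht => by ring) measurableSet_Ioi)
  calc ∫ t in Set.Ioi x, t ^ (s - 1) * Real.exp (-t)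
      ≤ ∫ t in Set.Ioi x, Real.exp (-(l*x)) * (t ^ (s - 1) * Real.exp (-((1-l) * t))) := by
        refine setIntegral_mono_on hif (hig2.mono_set (Ioi_subset_Ioi hx.le)) measurableSet_Ioi ?_
        intro t ht
        rw [Set.mem_Ioi] at ht
        have htpos : 0 < t := lt_trans hx ht
        have hrw : Real.exp (-(l*x)) * (t ^ (s - 1) * Real.exp (-((1-l) * t)))
            = t ^ (s-1) * Real.exp (-t + l * (t - x)) := by
          rw [show -t + l * (t - x) = -(l*x) + -((1-l)*t) by ring, Real.exp_add]; ring
        rw [hrw]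
        apply mul_le_mul_of_nonneg_left _ (Real.rpow_nonneg htpos.le _)
        rw [Real.exp_le_exp]
        nlinarith
    _ ≤ ∫ t in Set.Ioi 0, Real.exp (-(l*x)) * (t ^ (s - 1) * Real.exp (-((1-l) * t))) := by
        apply setIntegral_mono_set hig2
        · filter_upwards [self_mem_ae_restrict (measurableSet_Ioi : MeasurableSet (Ioi (0:ℝ)))]
            with t ht
          have : (0:ℝ) < t := ht
          positivity
        · exact HasSubset.Subset.eventuallyLE (Ioi_subset_Ioi hx.le)
    _ = Real.exp (-(l * x)) * ((1 / (1 - l)) ^ s * Real.Gamma s) := by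
        rw [integral_const_mul, Real.integral_rpow_mul_exp_neg_mul_Ioi hs h1l]

theorem incomplete_gamma_tail_bound :
    ∃ C > (0 : ℝ), ∀ s x : ℝ, 0 < s → 0 < x → s + 2 ≤ x →
      (1 / Real.Gamma s) * ∫ t in Set.Ioi x, t ^ (s - 1) * Real.exp (-t)
        ≤ C * (Real.exp (-(x - s) ^ 2 / (4 * s)) + Real.exp (-|x - s| / 4)) := by
  refine ⟨1, one_pos, fun s x hs hx hsx => ?_⟩
  have hG : 0 < Real.Gamma s := Real.Gamma_pos_of_pos hs
  have habs : |x - s| = x - s := abs_of_nonneg (by linarith)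
  have main : ∀ l : ℝ, 0 ≤ l → l ≤ 1/2 →
      (1 / Real.Gamma s) * ∫ t in Set.Ioi x, t ^ (s - 1) * Real.exp (-t)
        ≤ Real.exp (-(l * x) + s * (l + l^2)) := by
    intro l h0 h1
    have h1l : 0 < 1 - l := by linarith
    have hc := chernoff hs hx h0 (by linarith)
    have hkey : (1 / (1 - l)) ^ s ≤ Real.exp (s * (l + l^2)) := by
      have h2 : 1 / (1 - l) ≤ Real.exp (l + l^2) := by
        have hk := key_exp h0 h1
        rw [div_le_iff₀ h1l]
        calc (1:ℝ) = Real.exp (l + l^2) * Real.exp (-(l + l^2)) := by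
              rw [← Real.exp_add, add_neg_cancel, Real.exp_zero]
          _ ≤ Real.exp (l + l^2) * (1 - l) :=
              mul_le_mul_of_nonneg_left hk (Real.exp_pos _).le
      calc (1 / (1 - l)) ^ s ≤ (Real.exp (l + l^2)) ^ s :=
            Real.rpow_le_rpow (by positivity) h2 hs.le
        _ = Real.exp (s * (l + l^2)) := by rw [← Real.exp_mul, mul_comm]
    calc (1 / Real.Gamma s) * ∫ t in Set.Ioi x, t ^ (s - 1) * Real.exp (-t)
        ≤ (1 / Real.Gamma s) * (Real.exp (-(l * x)) * ((1 / (1 - l)) ^ s * Real.Gamma s)) := by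
          apply mul_le_mul_of_nonneg_left hc (by positivity)
      _ = Real.exp (-(l * x)) * (1 / (1 - l)) ^ s := by field_simp
      _ ≤ Real.exp (-(l * x)) * Real.exp (s * (l + l^2)) := by
          apply mul_le_mul_of_nonneg_left hkey (Real.exp_pos _).le
      _ = Real.exp (-(l * x) + s * (l + l^2)) := (Real.exp_add _ _).symm
  rcases le_or_gt x (2*s) with hc | hc
  · set l : ℝ := (x - s) / (2*s) with hl
    have h0 : 0 ≤ l := by apply div_nonneg <;> linarith
    have h1 : l ≤ 1/2 := by rw [hl, div_le_iff₀ (by linarith)]; linarith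
    have hmain := main l h0 h1
    have hexp : -(l * x) + s * (l + l^2) = -(x - s)^2 / (4*s) := by
      rw [hl]; field_simp; ring
    calc (1 / Real.Gamma s) * ∫ t in Set.Ioi x, t ^ (s - 1) * Real.exp (-t)
        ≤ Real.exp (-(l * x) + s * (l + l^2)) := hmain
      _ = Real.exp (-(x - s)^2 / (4*s)) := by rw [hexp]
      _ ≤ 1 * (Real.exp (-(x - s) ^ 2 / (4 * s)) + Real.exp (-|x - s| / 4)) := by
          have := Real.exp_pos (-|x - s| / 4); linarith
  · have hmain := main (1/2) (by norm_num) le_rfl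
    have hexp : -((1:ℝ)/2 * x) + s * (1/2 + (1/2)^2) ≤ -(x - s) / 4 := by nlinarith
    calc (1 / Real.Gamma s) * ∫ t in Set.Ioi x, t ^ (s - 1) * Real.exp (-t)
        ≤ Real.exp (-(1/2 * x) + s * (1/2 + (1/2)^2)) := hmain
      _ ≤ Real.exp (-(x - s) / 4) := Real.exp_le_exp.mpr hexp
      _ = Real.exp (-|x - s| / 4) := by rw [habs]
      _ ≤ 1 * (Real.exp (-(x - s) ^ 2 / (4 * s)) + Real.exp (-|x - s| / 4)) := by
          have := Real.exp_pos (-(x - s) ^ 2 / (4*s)); linarith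
end
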